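/- Under the same hypotheses (Φ ⊂ ℝⁿ symmetric under negation, all elements of squared norm 2, y ∈ Φ, |Φ| = nh, #{α : (y,α)=1} = 2h−4, #{α : (y,α)=2} = 1, (y,α) ∈ {0,±1,±2}), one has Σ_{α∈Φ} R₆(α) = 4(30(n²−16) + h(n²−48n+272))/(n²+12n+32), where R₆(x) = (x,y)⁶ − (15/(8+n))(x,y)⁴‖x‖²‖y‖²+ (45/(48+14n+n²))(x,y)²‖x‖⁴‖y‖⁴ − (15/(192+104n+18n²+n³))‖x‖⁶‖y‖⁶. -/

import Mathlib

/-- The dot product on `Fin n → ℝ`. -/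
def dotR {n : ℕ} (x y : Fin n → ℝ) : ℝ := ∑ i, x i * y i

lemma dotR_comm {n : ℕ} (x y : Fin n → ℝ) : dotR x y = dotR y x :=
  Finset.sum_congr rfl fun i _ => mul_comm _ _

lemma dotR_neg {n : ℕ} (x y : Fin n → ℝ) : dotR x (-y) = -dotR x y := by
  simp [dotR, mul_neg]

set_option maxHeartbeats 1000000 in
/-- Sum of the degree-6 harmonic polynomial `R₆` over a simply-laced root system
of rank `n` and Coxeter number `h`, normalized so all roots have squared norm 2. -/
theorem stmt_6 (n h : ℕ) (hh : 2 ≤ h) (Φ : Finset (Fin n → ℝ)) (y : Fin n → ℝ)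
    (hneg : ∀ α ∈ Φ, -α ∈ Φ)
    (hnorm : ∀ α ∈ Φ, dotR α α = 2)
    (hy : y ∈ Φ)
    (hcard : Φ.card = n * h)
    (h1 : (Φ.filter (fun α => dotR y α = 1)).card = 2 * h - 4)
    (h2 : (Φ.filter (fun α => dotR y α = 2)).card = 1)
    (hvals : ∀ α ∈ Φ, dotR y α = 0 ∨ dotR y α = 1 ∨ dotR y α = -1 ∨
      dotR y α = 2 ∨ dotR y α = -2) :
    ∑ α ∈ Φ,
      ((dotR α y) ^ 6
        - 15 / (8 + (n : ℝ)) * (dotR α y) ^ 4 * (dotR α α) * (dotR y y)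
        + 45 / (48 + 14 * (n : ℝ) + (n : ℝ) ^ 2) * (dotR α y) ^ 2
            * (dotR α α) ^ 2 * (dotR y y) ^ 2
        - 15 / (192 + 104 * (n : ℝ) + 18 * (n : ℝ) ^ 2 + (n : ℝ) ^ 3)
            * (dotR α α) ^ 3 * (dotR y y) ^ 3)
      = 4 * (30 * ((n : ℝ) ^ 2 - 16) + (h : ℝ) * ((n : ℝ) ^ 2 - 48 * (n : ℝ) + 272))
          / ((n : ℝ) ^ 2 + 12 * (n : ℝ) + 32) := by
  classical
  set A : ℝ := 15 / (8 + (n : ℝ)) with hA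
  set B : ℝ := 45 / (48 + 14 * (n : ℝ) + (n : ℝ) ^ 2) with hB
  set C : ℝ := 15 / (192 + 104 * (n : ℝ) + 18 * (n : ℝ) ^ 2 + (n : ℝ) ^ 3) with hC
  set G : ℝ → ℝ := fun t => t ^ 6 - A * t ^ 4 * 2 * 2 + B * t ^ 2 * 2 ^ 2 * 2 ^ 2
    - C * 2 ^ 3 * 2 ^ 3 with hG
  -- cardinality of the (-1) fiber
  have cm1 : (Φ.filter (fun α => dotR y α = -1)).card = 2 * h - 4 := by
    rw [← h1]
    apply Finset.card_nbij' (fun α => -α) (fun α => -α)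
    · intro a ha
      simp only [Finset.mem_coe, Finset.mem_filter] at ha ⊢
      exact ⟨hneg a ha.1, by simp [dotR_neg, ha.2]⟩
    · intro a ha
      simp only [Finset.mem_coe, Finset.mem_filter] at ha ⊢
      exact ⟨hneg a ha.1, by simp [dotR_neg, ha.2]⟩
    · intro a _; simp
    · intro a _; simp
  have cm2 : (Φ.filter (fun α => dotR y α = -2)).card = 1 := by
    refine Eq.trans ?_ h2
    apply Finset.card_nbij' (fun α => -α) (fun α => -α)
    · intro a ha
      simp only [Finset.mem_coe, Finset.mem_filter] at ha ⊢
      exact ⟨hneg a ha.1, by simp [dotR_neg, ha.2]⟩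
    · intro a ha
      simp only [Finset.mem_coe, Finset.mem_filter] at ha ⊢
      exact ⟨hneg a ha.1, by simp [dotR_neg, ha.2]⟩
    · intro a _; simp
    · intro a _; simp
  -- generic fiberwise sum for functions vanishing at 0
  have key : ∀ g : ℝ → ℝ, g 0 = 0 →
      ∑ α ∈ Φ, g (dotR y α) =
        ((2 * h - 4 : ℕ) : ℝ) * (g 1 + g (-1)) + g 2 + g (-2) := by
    intro g hg0
    have hmaps : ∀ α ∈ Φ, dotR y α ∈ ({0, 1, -1, 2, -2} : Finset ℝ) := by
      intro α hα
      have := hvals α hα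
      simp only [Finset.mem_insert, Finset.mem_singleton]
      tauto
    have := Finset.sum_fiberwise_of_maps_to hmaps (fun α => g (dotR y α))
    rw [← this]
    have fib : ∀ v : ℝ, ∑ α ∈ Φ.filter (fun α => dotR y α = v), g (dotR y α)
        = ((Φ.filter (fun α => dotR y α = v)).card : ℝ) * g v := by
      intro v
      rw [Finset.sum_congr rfl (fun α hα => by
        rw [(Finset.mem_filter.mp hα).2]), Finset.sum_const, nsmul_eq_mul]
    have e0 : ((0:ℝ)) ∉ ({1, -1, 2, -2} : Finset ℝ) := by norm_num
    have e1 : ((1:ℝ)) ∉ ({-1, 2, -2} : Finset ℝ) := by norm_num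
    have e2 : ((-1:ℝ)) ∉ ({2, -2} : Finset ℝ) := by norm_num
    have e3 : ((2:ℝ)) ∉ ({-2} : Finset ℝ) := by norm_num
    rw [show ({0, 1, -1, 2, -2} : Finset ℝ)
        = insert 0 (insert 1 (insert (-1) (insert 2 {-2}))) from rfl]
    rw [Finset.sum_insert e0, Finset.sum_insert e1, Finset.sum_insert e2,
      Finset.sum_insert e3, Finset.sum_singleton]
    rw [fib 0, fib 1, fib (-1), fib 2, fib (-2), h1, cm1, h2, cm2, hg0]
    push_cast
    ring
  -- rewrite the summand using hnorm and dotR_comm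
  have hsum : ∑ α ∈ Φ,
      ((dotR α y) ^ 6
        - A * (dotR α y) ^ 4 * (dotR α α) * (dotR y y)
        + B * (dotR α y) ^ 2 * (dotR α α) ^ 2 * (dotR y y) ^ 2
        - C * (dotR α α) ^ 3 * (dotR y y) ^ 3)
      = ∑ α ∈ Φ, G (dotR y α) := by
    apply Finset.sum_congr rfl
    intro α hα
    rw [hnorm α hα, hnorm y hy, dotR_comm α y]
    try simp only [hG]
    try ring
  rw [hsum]
  -- split off the constant term
  have hsplit : ∑ α ∈ Φ, G (dotR y α)
      = (∑ α ∈ Φ, (G (dotR y α) - G 0)) + (Φ.card : ℝ) * G 0 := by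
    have e : ∀ α ∈ Φ, G (dotR y α) = (G (dotR y α) - G 0) + G 0 := fun α _ => by ring
    rw [Finset.sum_congr rfl e, Finset.sum_add_distrib, Finset.sum_const, nsmul_eq_mul]
  rw [hsplit, key (fun t => G t - G 0) (by simp), hcard]
  have hc : ((2 * h - 4 : ℕ) : ℝ) = 2 * (h : ℝ) - 4 := by
    have : (2 * h - 4 : ℕ) + 4 = 2 * h := by omega
    have := congrArg (Nat.cast : ℕ → ℝ) this
    push_cast at this
    linarith
  rw [hc]
  simp only [hG, hA, hB, hC]
  have d1 : (8 + (n : ℝ)) ≠ 0 := by positivity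
  have d2 : (48 + 14 * (n : ℝ) + (n : ℝ) ^ 2) ≠ 0 := by positivity
  have d3 : (192 + 104 * (n : ℝ) + 18 * (n : ℝ) ^ 2 + (n : ℝ) ^ 3) ≠ 0 := by positivity
  have d4 : ((n : ℝ) ^ 2 + 12 * (n : ℝ) + 32) ≠ 0 := by positivity
  push_cast
  field_simp
  ring
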